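/- (Optimality of the 1/n rate.) Let p(x) := x² − 2x + 1/2. Then for every n ≥ 1, the n-th finite free multiplicative convolution power satisfies p^{⊠_2 n}(x) = x² − 2x + 2^{−n}, whose roots are λ_1^(n) = 1 + √(1 − 2^{−n}) and λ_2^(n) = 1 − √(1 − 2^{−n}). Moreover lim_{n→∞} (λ_1^(n))^{1/n} = 1, lim_{n→∞} (λ_2^(n))^{1/n} = 1/2, and n·(log((λ_1^(n))^{1/n}) − log 1) → log 2 and n·(log((λ_2^(n))^{1/n}) − log(1/2)) → −log 2 as n → ∞; hence the O(1/n) order of convergence is optimal. -/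

import Mathlib

open Polynomial Filter

/-- Finite free multiplicative convolution of two polynomials of degree `d`:
for `p(x) = Σ (-1)^i p_i x^{d-i}` and `q(x) = Σ (-1)^i q_i x^{d-i}`,
`(p ⊠_d q)(x) = Σ (-1)^i (p_i q_i / binom(d,i)) x^{d-i}`. -/
noncomputable def ffmul (d : ℕ) (p q : Polynomial ℝ) : Polynomial ℝ :=
  ∑ i ∈ Finset.range (d + 1),
    Polynomial.C ((-1 : ℝ) ^ i * p.coeff (d - i) * q.coeff (d - i) / (d.choose i : ℝ)) *
      Polynomial.X ^ (d - i)

/-- `ffmulPow d p n` is the `n`-th finite free multiplicative convolution power `p^{⊠_d n}`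
(for `n ≥ 1`); the convolution identity `(x-1)^d` is used as the 0-th power. -/
noncomputable def ffmulPow (d : ℕ) (p : Polynomial ℝ) : ℕ → Polynomial ℝ
  | 0 => (Polynomial.X - 1) ^ d
  | n + 1 => ffmul d p (ffmulPow d p n)

/-- Normalized elementary symmetric function `ẽ_i(Λ) = e_i(Λ) / binom(d,i)`. -/
noncomputable def etilde (d i : ℕ) (Λ : Multiset ℝ) : ℝ :=
  Λ.esymm i / (d.choose i : ℝ)

lemma ffmul_step (c : ℝ) :
    ffmul 2 (Polynomial.X ^ 2 - Polynomial.C 2 * Polynomial.X + Polynomial.C (1/2))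
      (Polynomial.X ^ 2 - Polynomial.C 2 * Polynomial.X + Polynomial.C c)
    = Polynomial.X ^ 2 - Polynomial.C 2 * Polynomial.X + Polynomial.C (c / 2) := by
  simp [ffmul, Finset.sum_range_succ, coeff_one]
  ring_nf
  simp [Polynomial.coeff_X]
  ring_nf

lemma pow_formula (n : ℕ) (hn : 1 ≤ n) :
    ffmulPow 2 (Polynomial.X ^ 2 - Polynomial.C 2 * Polynomial.X + Polynomial.C (1/2)) n
      = Polynomial.X ^ 2 - Polynomial.C 2 * Polynomial.X + Polynomial.C ((1 : ℝ) / 2 ^ n) := by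
  induction n with
  | zero => omega
  | succ m ih =>
    rcases Nat.eq_zero_or_pos m with hm | hm
    · subst hm
      show ffmul 2 _ (ffmulPow 2 _ 0) = _
      have h0 : ffmulPow 2 (Polynomial.X ^ 2 - Polynomial.C 2 * Polynomial.X + Polynomial.C (1/2)) 0
          = Polynomial.X ^ 2 - Polynomial.C 2 * Polynomial.X + Polynomial.C 1 := by
        show (Polynomial.X - 1) ^ 2 = _
        have h2 : (Polynomial.C 2 : Polynomial ℝ) = 2 := map_ofNat Polynomial.C 2
        have h1 : (Polynomial.C 1 : Polynomial ℝ) = 1 := Polynomial.C_1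
        rw [h2, h1]
        ring
      rw [h0, ffmul_step]
      norm_num
    · show ffmul 2 _ (ffmulPow 2 _ m) = _
      rw [ih hm, ffmul_step]
      congr 1
      rw [div_div]
      ring_nf

/-- optimality of the `1/n` rate for `p(x) = x² − 2x + 1/2`:
`p^{⊠_2 n}(x) = x² − 2x + 2^{−n}` with roots `1 ± √(1 − 2^{−n})`,
`(λ_1^(n))^{1/n} → 1`, `(λ_2^(n))^{1/n} → 1/2`, and
`n(log((λ_1^(n))^{1/n}) − log 1) → log 2`, `n(log((λ_2^(n))^{1/n}) − log(1/2)) → −log 2`. -/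
theorem rate_optimal (p : Polynomial ℝ)
    (hp : p = Polynomial.X ^ 2 - Polynomial.C 2 * Polynomial.X + Polynomial.C (1 / 2))
    (lam1 lam2 : ℕ → ℝ)
    (h1 : ∀ n : ℕ, lam1 n = 1 + Real.sqrt (1 - 1 / 2 ^ n))
    (h2 : ∀ n : ℕ, lam2 n = 1 - Real.sqrt (1 - 1 / 2 ^ n)) :
    (∀ n : ℕ, 1 ≤ n → ffmulPow 2 p n
        = Polynomial.X ^ 2 - Polynomial.C 2 * Polynomial.X + Polynomial.C ((1 : ℝ) / 2 ^ n)) ∧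
    (∀ n : ℕ, 1 ≤ n → ffmulPow 2 p n
        = (Polynomial.X - Polynomial.C (lam1 n)) * (Polynomial.X - Polynomial.C (lam2 n))) ∧
    Filter.Tendsto (fun n : ℕ => (lam1 n) ^ (1 / (n : ℝ))) Filter.atTop (nhds 1) ∧
    Filter.Tendsto (fun n : ℕ => (lam2 n) ^ (1 / (n : ℝ))) Filter.atTop (nhds (1 / 2)) ∧
    Filter.Tendsto
      (fun n : ℕ => (n : ℝ) * (Real.log ((lam1 n) ^ (1 / (n : ℝ))) - Real.log 1))
      Filter.atTop (nhds (Real.log 2)) ∧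
    Filter.Tendsto
      (fun n : ℕ => (n : ℝ) * (Real.log ((lam2 n) ^ (1 / (n : ℝ))) - Real.log (1 / 2)))
      Filter.atTop (nhds (-Real.log 2)) := by
  subst hp
  -- basic facts
  have hle : ∀ n : ℕ, (0:ℝ) ≤ 1 - 1 / 2 ^ n := by
    intro n
    have : (1:ℝ) / 2 ^ n ≤ 1 := by
      rw [div_le_one (by positivity)]
      exact one_le_pow₀ (by norm_num : (1:ℝ) ≤ 2)
    linarith
  have hsq : ∀ n : ℕ, Real.sqrt (1 - 1 / 2 ^ n) ^ 2 = 1 - 1 / 2 ^ n :=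
    fun n => Real.sq_sqrt (hle n)
  have hslt : ∀ n : ℕ, Real.sqrt (1 - 1 / 2 ^ n) < 1 := by
    intro n
    have hlt : (1:ℝ) - 1 / 2 ^ n < 1 := by
      have : (0:ℝ) < 1 / 2 ^ n := by positivity
      linarith
    have h := Real.sqrt_lt_sqrt (hle n) hlt
    simpa using h
  have hl1pos : ∀ n : ℕ, 0 < lam1 n := by
    intro n; rw [h1]; have := Real.sqrt_nonneg (1 - 1 / 2 ^ n); linarith
  have hl2pos : ∀ n : ℕ, 0 < lam2 n := by
    intro n; rw [h2]; have := hslt n; linarith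
  have hsum : ∀ n : ℕ, lam1 n + lam2 n = 2 := by
    intro n; rw [h1, h2]; ring
  have hprod : ∀ n : ℕ, lam1 n * lam2 n = 1 / 2 ^ n := by
    intro n; rw [h1, h2]
    have := hsq n; nlinarith [hsq n]
  -- limits of lam1, log lam1
  have hpow0 : Tendsto (fun n : ℕ => (1:ℝ) / 2 ^ n) atTop (nhds 0) := by
    have := tendsto_pow_atTop_nhds_zero_of_lt_one (by norm_num : (0:ℝ) ≤ 1/2)
      (by norm_num : (1:ℝ)/2 < 1)
    refine this.congr fun n => ?_
    rw [div_pow, one_pow]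
  have hs_tend : Tendsto (fun n : ℕ => Real.sqrt (1 - 1 / 2 ^ n)) atTop (nhds 1) := by
    have h' : Tendsto (fun n : ℕ => (1:ℝ) - 1 / 2 ^ n) atTop (nhds 1) := by
      simpa using tendsto_const_nhds.sub hpow0
    have := (Real.continuous_sqrt.tendsto 1).comp h'
    simpa [Function.comp_def] using this
  have hl1 : Tendsto lam1 atTop (nhds 2) := by
    have : Tendsto (fun n : ℕ => 1 + Real.sqrt (1 - 1 / 2 ^ n)) atTop (nhds 2) := by
      have h := ((tendsto_const_nhds : Tendsto (fun _ : ℕ => (1:ℝ)) atTop (nhds 1)).add hs_tend)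
      rw [show (1:ℝ) + 1 = 2 by norm_num] at h
      exact h
    exact this.congr fun n => (h1 n).symm
  have hlog1 : Tendsto (fun n : ℕ => Real.log (lam1 n)) atTop (nhds (Real.log 2)) :=
    ((Real.continuousAt_log (by norm_num)).tendsto.comp hl1)
  have hinv : Tendsto (fun n : ℕ => 1 / (n:ℝ)) atTop (nhds 0) :=
    tendsto_one_div_atTop_nhds_zero_nat
  refine ⟨fun n hn => pow_formula n hn, ?_, ?_, ?_, ?_, ?_⟩
  · -- factorization
    intro n hn
    rw [pow_formula n hn, ← hprod n, ← hsum n]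
    rw [Polynomial.C_add, Polynomial.C_mul]
    ring
  · -- lam1 ^ (1/n) → 1
    have key : ∀ n : ℕ, lam1 n ^ (1 / (n:ℝ)) = Real.exp (Real.log (lam1 n) * (1 / (n:ℝ))) :=
      fun n => Real.rpow_def_of_pos (hl1pos n) _
    have : Tendsto (fun n : ℕ => Real.exp (Real.log (lam1 n) * (1 / (n:ℝ)))) atTop (nhds 1) := by
      have hmul : Tendsto (fun n : ℕ => Real.log (lam1 n) * (1 / (n:ℝ))) atTop (nhds 0) := by
        have := hlog1.mul hinv
        simpa using this
      have := (Real.continuous_exp.tendsto 0).comp hmul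
      simpa [Function.comp_def] using this
    exact this.congr fun n => (key n).symm
  · -- lam2 ^ (1/n) → 1/2
    have key : ∀ n : ℕ, lam2 n ^ (1 / (n:ℝ)) = Real.exp (Real.log (lam2 n) * (1 / (n:ℝ))) :=
      fun n => Real.rpow_def_of_pos (hl2pos n) _
    have hlog2 : ∀ n : ℕ, Real.log (lam2 n) = -((n:ℝ) * Real.log 2) - Real.log (lam1 n) := by
      intro n
      have hlam2 : lam2 n = (1 / 2 ^ n) / lam1 n := by
        field_simp [← hprod n, (hl1pos n).ne', mul_comm]
        rw [show lam2 n * 2 ^ n * lam1 n = (lam1 n * lam2 n) * 2 ^ n by ring, hprod n]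
        field_simp
      rw [hlam2, Real.log_div (by positivity) (hl1pos n).ne']
      rw [one_div, Real.log_inv, Real.log_pow]
    have hexp : Tendsto (fun n : ℕ => Real.log (lam2 n) * (1 / (n:ℝ))) atTop
        (nhds (-Real.log 2)) := by
      have heq : ∀ᶠ n : ℕ in atTop, -Real.log 2 - Real.log (lam1 n) * (1 / (n:ℝ))
          = Real.log (lam2 n) * (1 / (n:ℝ)) := by
        filter_upwards [eventually_ge_atTop 1] with n hn
        have hn0 : (n:ℝ) ≠ 0 := Nat.cast_ne_zero.mpr (by omega)
        rw [hlog2 n]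
        field_simp
        try ring
      have hbase : Tendsto (fun n : ℕ => -Real.log 2 - Real.log (lam1 n) * (1 / (n:ℝ)))
          atTop (nhds (-Real.log 2)) := by
        have h := ((tendsto_const_nhds :
            Tendsto (fun _ : ℕ => -Real.log 2) atTop (nhds (-Real.log 2))).sub (hlog1.mul hinv))
        simpa using h
      exact hbase.congr' heq
    have : Tendsto (fun n : ℕ => Real.exp (Real.log (lam2 n) * (1 / (n:ℝ)))) atTop
        (nhds (1/2)) := by
      have := (Real.continuous_exp.tendsto (-Real.log 2)).comp hexp
      have he : Real.exp (-Real.log 2) = 1/2 := by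
        rw [Real.exp_neg, Real.exp_log (by norm_num : (0:ℝ) < 2)]
        norm_num
      rw [← he]
      exact this
    exact this.congr fun n => (key n).symm
  · -- n * (log(lam1^(1/n)) - log 1) → log 2
    refine hlog1.congr' ?_
    filter_upwards [eventually_ge_atTop 1] with n hn
    have hn0 : (n:ℝ) ≠ 0 := Nat.cast_ne_zero.mpr (by omega)
    rw [Real.log_rpow (hl1pos n), Real.log_one]
    field_simp
    simp
  · -- n * (log(lam2^(1/n)) - log(1/2)) → -log 2
    have hlog2 : ∀ n : ℕ, Real.log (lam2 n) = -((n:ℝ) * Real.log 2) - Real.log (lam1 n) := by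
      intro n
      have hlam2 : lam2 n = (1 / 2 ^ n) / lam1 n := by
        field_simp [← hprod n, (hl1pos n).ne', mul_comm]
        rw [show lam2 n * 2 ^ n * lam1 n = (lam1 n * lam2 n) * 2 ^ n by ring, hprod n]
        field_simp
      rw [hlam2, Real.log_div (by positivity) (hl1pos n).ne']
      rw [one_div, Real.log_inv, Real.log_pow]
    have hbase : Tendsto (fun n : ℕ => -Real.log (lam1 n)) atTop (nhds (-Real.log 2)) :=
      hlog1.neg
    refine hbase.congr' ?_
    filter_upwards [eventually_ge_atTop 1] with n hn
    have hn0 : (n:ℝ) ≠ 0 := Nat.cast_ne_zero.mpr (by omega)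
    rw [Real.log_rpow (hl2pos n), hlog2 n,
      Real.log_div one_ne_zero (two_ne_zero), Real.log_one]
    field_simp
    try ring
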